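/- Let X ∈ Mat_{m×n}(ℂ) and Y ∈ Mat_{n×m}(ℂ). If the m×m matrix XY is invertible and diagonalizable, then the n×n matrix YX is diagonalizable. -/

import Mathlib

open Polynomial Matrix



-- aux lemma 1: conjugation and aeval
theorem myAevalConj {k : ℕ} (P N : Matrix (Fin k) (Fin k) ℂ) (hP : IsUnit P)
    (p : ℂ[X]) : aeval (P * N * P⁻¹) p = P * aeval N p * P⁻¹ := by
  have hPP : P * P⁻¹ = 1 := mul_nonsing_inv P ((isUnit_iff_isUnit_det P).mp hP)
  have hPP' : P⁻¹ * P = 1 := nonsing_inv_mul P ((isUnit_iff_isUnit_det P).mp hP)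
  induction p using Polynomial.induction_on' with
  | add p q hp hq => simp [hp, hq, Matrix.mul_add, Matrix.add_mul]
  | monomial n a =>
    have hpow : ∀ j : ℕ, (P * N * P⁻¹) ^ j = P * N ^ j * P⁻¹ := by
      intro j
      induction j with
      | zero => simp [hPP]
      | succ j ih =>
        rw [pow_succ, ih, pow_succ]
        calc P * N ^ j * P⁻¹ * (P * N * P⁻¹) = P * N ^ j * (P⁻¹ * P) * N * P⁻¹ := by
              noncomm_ring
          _ = P * (N ^ j * N) * P⁻¹ := by rw [hPP']; noncomm_ring
    rw [aeval_monomial, aeval_monomial, hpow, Algebra.algebraMap_eq_smul_one]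
    simp [smul_mul_assoc, mul_smul_comm]


theorem myAevalSwap {m n : ℕ} (X : Matrix (Fin m) (Fin n) ℂ) (Y : Matrix (Fin n) (Fin m) ℂ)
    (p : ℂ[X]) : X * aeval (Y * X) p = aeval (X * Y) p * X := by
  induction p using Polynomial.induction_on' with
  | add p q hp hq => simp [Matrix.mul_add, Matrix.add_mul, hp, hq]
  | monomial k a =>
    have hpow : ∀ j : ℕ, X * (Y * X) ^ j = (X * Y) ^ j * X := by
      intro j
      induction j with
      | zero => simp
      | succ j ih =>
        rw [pow_succ, pow_succ, ← Matrix.mul_assoc, ih, Matrix.mul_assoc,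
          Matrix.mul_assoc, Matrix.mul_assoc]
    rw [aeval_monomial, aeval_monomial, Algebra.algebraMap_eq_smul_one,
      Algebra.algebraMap_eq_smul_one]
    simp only [smul_mul_assoc, one_mul, Matrix.smul_mul, Matrix.mul_smul]
    rw [hpow]


theorem myDiagOfEigen {k : ℕ} (M : Matrix (Fin k) (Fin k) ℂ)
    (h : (⨆ μ : ℂ, Module.End.eigenspace (Matrix.toLin' M) μ) = ⊤) :
    ∃ Q : Matrix (Fin k) (Fin k) ℂ, IsUnit Q ∧ (Q⁻¹ * M * Q).IsDiag := by
  set f := Matrix.toLin' M with hf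
  set S : Set (Fin k → ℂ) := ⋃ μ : ℂ, (Module.End.eigenspace f μ : Set (Fin k → ℂ)) with hS
  have hspan : Submodule.span ℂ S = ⊤ := by
    rw [eq_top_iff, ← h]
    refine iSup_le fun μ => ?_
    intro x hx
    exact Submodule.subset_span (Set.mem_iUnion.mpr ⟨μ, hx⟩)
  obtain ⟨t, hts, htsp, hti⟩ := exists_linearIndependent ℂ S
  have htop : Submodule.span ℂ t = ⊤ := by rw [htsp, hspan]
  have htfin : t.Finite := hti.setFinite
  haveI := htfin.fintype
  let b : Module.Basis t ℂ (Fin k → ℂ) := Module.Basis.mk hti (by rw [Subtype.range_coe, htop])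
  have hcard : Fintype.card t = k := by
    have h1 := Module.finrank_eq_card_basis b
    rw [Module.finrank_fin_fun] at h1
    omega
  let e : t ≃ Fin k := Fintype.equivFinOfCardEq hcard
  let b' : Module.Basis (Fin k) ℂ (Fin k → ℂ) := b.reindex e
  have hb'mem : ∀ j, (b' j : Fin k → ℂ) ∈ S := by
    intro j
    have : b' j = ((e.symm j : t) : Fin k → ℂ) := by
      rw [Module.Basis.reindex_apply, Module.Basis.mk_apply]
    rw [this]
    exact hts (e.symm j).2
  have hμ : ∀ j, ∃ c : ℂ, f (b' j) = c • b' j := by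
    intro j
    obtain ⟨c, hc⟩ := Set.mem_iUnion.mp (hb'mem j)
    exact ⟨c, Module.End.mem_eigenspace_iff.mp hc⟩
  choose μ hμ using hμ
  let Q : Matrix (Fin k) (Fin k) ℂ := (Pi.basisFun ℂ (Fin k)).toMatrix ⇑b'
  haveI : Invertible Q := (Pi.basisFun ℂ (Fin k)).invertibleToMatrix b'
  have hQ : IsUnit Q := isUnit_of_invertible Q
  have hQent : ∀ r c, Q r c = b' c r := by
    intro r c
    simp [Q, Module.Basis.toMatrix_apply]
  have key : M * Q = Q * Matrix.diagonal μ := by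
    ext r c
    have h1 : (M * Q) r c = (M.mulVec (b' c)) r := by
      simp only [Matrix.mul_apply, Matrix.mulVec, dotProduct]
      exact Finset.sum_congr rfl fun j _ => by rw [hQent j c]
    have h2 : M.mulVec (b' c) = μ c • b' c := by
      rw [← Matrix.toLin'_apply, ← hf]
      exact hμ c
    rw [h1, h2, Matrix.mul_diagonal, hQent r c]
    simp [mul_comm]
  refine ⟨Q, hQ, ?_⟩
  have hdet : IsUnit Q.det := (Matrix.isUnit_iff_isUnit_det Q).mp hQ
  rw [Matrix.mul_assoc, key, ← Matrix.mul_assoc, Matrix.nonsing_inv_mul Q hdet, Matrix.one_mul]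
  exact Matrix.isDiag_diagonal μ


theorem mySupEigen (m n : ℕ)
    (X : Matrix (Fin m) (Fin n) ℂ) (Y : Matrix (Fin n) (Fin m) ℂ)
    (hinv : IsUnit (X * Y))
    (hdiag : ∃ P : Matrix (Fin m) (Fin m) ℂ, IsUnit P ∧ (P⁻¹ * (X * Y) * P).IsDiag) :
    (⨆ μ : ℂ, Module.End.eigenspace (Matrix.toLin' (Y * X)) μ) = ⊤ := by
  obtain ⟨P, hP, hD⟩ := hdiag
  have hPdet : IsUnit P.det := (Matrix.isUnit_iff_isUnit_det P).mp hP
  set D := P⁻¹ * (X * Y) * P with hDdef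
  have hDd : Matrix.diagonal D.diag = D := hD.diagonal_diag
  have hXY : X * Y = P * D * P⁻¹ := by
    rw [hDdef]
    rw [← Matrix.mul_assoc, ← Matrix.mul_assoc, Matrix.mul_nonsing_inv P hPdet,
      Matrix.one_mul, Matrix.mul_assoc, Matrix.mul_nonsing_inv P hPdet, Matrix.mul_one]
  have hDunit : IsUnit D := by
    rw [hDdef]
    exact ((Matrix.isUnit_nonsing_inv_iff.mpr hP)).mul hinv |>.mul hP
  have hdne : ∀ i, D.diag i ≠ 0 := by
    have hdet : IsUnit D.det := (Matrix.isUnit_iff_isUnit_det D).mp hDunit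
    rw [← hDd, Matrix.det_diagonal] at hdet
    intro i hi
    exact hdet.ne_zero (Finset.prod_eq_zero (Finset.mem_univ i) hi)
  set s : Finset ℂ := Finset.image D.diag Finset.univ with hs
  set p : ℂ[X] := ∏ c ∈ s, (Polynomial.X - C c) with hp
  -- aeval of diag entries
  have haed : aeval D.diag p = 0 := by
    funext i
    rw [hp, map_prod]
    rw [Finset.prod_apply]
    apply Finset.prod_eq_zero (Finset.mem_image_of_mem D.diag (Finset.mem_univ i))
    simp [Pi.algebraMap_apply]
  have haeD : aeval D p = 0 := by
    have : D = Matrix.diagonalAlgHom ℂ D.diag := hDd.symm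
    rw [this, aeval_algHom_apply, haed]
    exact Matrix.diagonal_zero
  have haeXY : aeval (X * Y) p = 0 := by
    rw [hXY, myAevalConj P D hP, haeD, Matrix.mul_zero, Matrix.zero_mul]
  set q : ℂ[X] := Polynomial.X * p with hq
  have haeq : aeval (Y * X) q = 0 := by
    rw [hq, _root_.map_mul, aeval_X, Matrix.mul_assoc, myAevalSwap X Y p, haeXY, Matrix.zero_mul,
      Matrix.mul_zero]
  have hsq : Squarefree q := by
    have h0 : (0 : ℂ) ∉ s := by
      intro h
      obtain ⟨i, -, hi⟩ := Finset.mem_image.mp h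
      exact hdne i hi
    have hq' : q = ∏ c ∈ insert (0 : ℂ) s, (Polynomial.X - C c) := by
      rw [Finset.prod_insert h0, ← hp, hq, map_zero, sub_zero]
    rw [hq']
    refine Polynomial.Separable.squarefree ?_
    exact (separable_prod_X_sub_C_iff' (f := id)).mpr fun a _ b _ hab => hab
  have hss : Module.End.IsSemisimple (R := ℂ) (M := Fin n → ℂ) (Matrix.toLin' (Y * X)) := by
    apply Module.End.isSemisimple_of_squarefree_aeval_eq_zero hsq
    have : Matrix.toLin' (Y * X) = Matrix.toLinAlgEquiv' (Y * X) := rfl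
    rw [this, aeval_algHom_apply, haeq, map_zero]
  have hsup := Module.End.iSup_maxGenEigenspace_eq_top (Matrix.toLin' (Y * X) : Module.End ℂ (Fin n → ℂ))
  rw [← hsup]
  congr 1
  funext μ
  exact (hss.isFinitelySemisimple.maxGenEigenspace_eq_eigenspace μ).symm

/-- If `XY` is invertible and diagonalizable then `YX` is diagonalizable. -/
theorem YX_diagonalizable (m n : ℕ)
    (X : Matrix (Fin m) (Fin n) ℂ) (Y : Matrix (Fin n) (Fin m) ℂ)
    (hinv : IsUnit (X * Y))
    (hdiag : ∃ P : Matrix (Fin m) (Fin m) ℂ, IsUnit P ∧ (P⁻¹ * (X * Y) * P).IsDiag) :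
    ∃ Q : Matrix (Fin n) (Fin n) ℂ, IsUnit Q ∧ (Q⁻¹ * (Y * X) * Q).IsDiag :=
  myDiagOfEigen (Y * X) (mySupEigen m n X Y hinv hdiag)
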